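/- Let X̄ be a triangle- and square-free simplicial graph and X its blowup with respect to graphs {L_v}. For an edge-type simplex Δ = {(v,x)} (the edge joining the apex v to a point x ∈ L_v^{(0)}), if v has valence ≥ 2 in X̄, then the saturation Sat(Δ) = {vertices lying in some simplex Δ' with Lk(Δ') = Lk(Δ)} is exactly the vertex set of Squid(v). -/

import Mathlib

/-- The projection of the blowup's vertex set to the base graph's vertex set. -/
def squidProj {V : Type*} (L : V → Type*) : (V ⊕ (Σ v : V, L v)) → V
  | Sum.inl v => v
  | Sum.inr x => x.1

/-- Whether a vertex of the blowup is the apex (tip) of its squid. -/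
def isApex {V : Type*} (L : V → Type*) : (V ⊕ (Σ v : V, L v)) → Prop
  | Sum.inl _ => True
  | Sum.inr _ => False

/-- The blowup of a simplicial graph `X̄` with respect to a family of graphs `{L_v}`. -/
def blowup {V : Type*} (Xbar : SimpleGraph V) (L : V → Type*) :
    SimpleGraph (V ⊕ (Σ v : V, L v)) where
  Adj a b := Xbar.Adj (squidProj L a) (squidProj L b) ∨
    (squidProj L a = squidProj L b ∧ a ≠ b ∧ (isApex L a ∨ isApex L b))
  symm := by
    constructor
    intro a b h
    rcases h with h | ⟨h1, h2, h3⟩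
    · exact Or.inl h.symm
    · exact Or.inr ⟨h1.symm, h2.symm, h3.symm⟩
  loopless := by
    constructor
    intro a h
    rcases h with h | ⟨_, h2, _⟩
    · exact Xbar.loopless.irrefl _ h
    · exact h2 rfl

/-- The link of a simplex (set of vertices) in a graph (viewed as a flag complex). -/
def simplexLink {W : Type*} (G : SimpleGraph W) (s : Set W) : Set W :=
  {u | u ∉ s ∧ ∀ a ∈ s, G.Adj u a}

/-- If `X̄` is triangle- and square-free and `v` has valence ≥ 2, then
the saturation of the edge-type simplex `Δ = {(v,x)}` (the union of all simplices
with the same link as `Δ`) is exactly the vertex set of `Squid(v)`. -/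
lemma link_edge {V : Type*} (Xbar : SimpleGraph V) (L : V → Type*) (v : V) (y : L v) :
    simplexLink (blowup Xbar L) ({Sum.inl v, Sum.inr ⟨v, y⟩} : Set (V ⊕ (Σ v : V, L v))) =
      {u | Xbar.Adj (squidProj L u) v} := by
  ext u
  constructor
  · rintro ⟨hnot, hadj⟩
    have h2 := hadj (Sum.inr ⟨v, y⟩) (by simp)
    rcases h2 with h | ⟨hp, hne, hap | hap⟩
    · exact h
    · cases u with
      | inl a =>
        simp only [squidProj] at hp
        subst hp
        exact absurd (by simp) hnot
      | inr a => exact hap.elim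
    · exact hap.elim
  · intro h
    refine ⟨?_, ?_⟩
    · rintro (rfl | rfl)
      · exact Xbar.irrefl h
      · exact Xbar.irrefl h
    · rintro a (rfl | rfl)
      · exact Or.inl h
      · exact Or.inl h

lemma clique_pair {V : Type*} (Xbar : SimpleGraph V) (L : V → Type*) (v : V) (y : L v) :
    (blowup Xbar L).IsClique ({Sum.inl v, Sum.inr ⟨v, y⟩} : Set (V ⊕ (Σ v : V, L v))) := by
  have hadj : (blowup Xbar L).Adj (Sum.inl v) (Sum.inr ⟨v, y⟩) :=
    Or.inr ⟨rfl, by simp, Or.inl trivial⟩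
  rintro a (rfl | rfl) b (rfl | rfl) hab
  · exact absurd rfl hab
  · exact hadj
  · exact hadj.symm
  · exact absurd rfl hab

theorem saturation_of_edge_type_simplex {V : Type*} (Xbar : SimpleGraph V)
    (L : V → Type*) (htri : Xbar.CliqueFree 3)
    (hsq : ∀ a b c d : V, Xbar.Adj a b → Xbar.Adj b c → Xbar.Adj c d → Xbar.Adj d a →
      a = c ∨ b = d)
    (v : V) (x : L v)
    (w w' : V) (hne : w ≠ w') (hw : Xbar.Adj v w) (hw' : Xbar.Adj v w') :
    {u : V ⊕ (Σ v : V, L v) | ∃ s : Set (V ⊕ (Σ v : V, L v)),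
        (blowup Xbar L).IsClique s ∧
        simplexLink (blowup Xbar L) s =
          simplexLink (blowup Xbar L)
            ({Sum.inl v, Sum.inr ⟨v, x⟩} : Set (V ⊕ (Σ v : V, L v))) ∧
        u ∈ s} =
      {u : V ⊕ (Σ v : V, L v) | squidProj L u = v} := by
  classical
  ext u
  simp only [Set.mem_setOf_eq]
  constructor
  · rintro ⟨s, hcl, hlink, hus⟩
    have hmem : ∀ z : V, Xbar.Adj v z →
        (Sum.inl z : V ⊕ (Σ v : V, L v)) ∈ simplexLink (blowup Xbar L) s := by
      intro z hz
      rw [hlink, link_edge]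
      exact hz.symm
    have h1 := (hmem w hw).2 u hus
    have h2 := (hmem w' hw').2 u hus
    have h1 := h1.symm
    have h2 := h2.symm
    rcases h1 with h1 | ⟨h1, _, _⟩ <;> rcases h2 with h2 | ⟨h2, _, _⟩
    · rcases hsq v w (squidProj L u) w' hw h1.symm h2 hw'.symm with h | h
      · exact h.symm
      · exact absurd h hne
    · exfalso
      simp only [squidProj] at h1 h2
      rw [h2] at h1
      exact htri _ ((SimpleGraph.is3Clique_triple_iff).2 ⟨hw, hw', h1.symm⟩)
    · exfalso
      simp only [squidProj] at h1 h2
      rw [h1] at h2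
      exact htri _ ((SimpleGraph.is3Clique_triple_iff).2 ⟨hw, hw', h2⟩)
    · simp only [squidProj] at h1 h2
      exact absurd (h1.symm.trans h2) hne
  · intro hu
    cases u with
    | inl a =>
      simp only [squidProj] at hu
      subst hu
      exact ⟨_, clique_pair Xbar L a x, rfl, by simp⟩
    | inr a =>
      obtain ⟨b, y⟩ := a
      simp only [squidProj] at hu
      subst hu
      refine ⟨{Sum.inl b, Sum.inr ⟨b, y⟩}, clique_pair Xbar L b y, ?_, by simp⟩
      rw [link_edge, link_edge]
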